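/- arXiv:math/0606121 — 2 statements merged into one kernel-verified Lean document; each statement's English description precedes it below -/
import Mathlib

section
/- Let $A=[a_{ij}]$ be an $n\times n$ matrix over a commutative ring and let $1\le m\le n$. For $i,j=1,\dots,m$ define $c_{ij}$ to be the minor of $A$ corresponding to rows $\{i,m+1,\dots,n\}$ and columns $\{j,m+1,\dots,n\}$, and let $C=[c_{ij}]$ be the resulting $m\times m$ matrix. Let $A_{\mathcal{Q}\mathcal{Q}}$ be the submatrix of $A$ with rows and columns indexed by $\mathcal{Q}=\{m+1,\dots,n\}$. Then $\det C = \det A \cdot (\det A_{\mathcal{Q}\mathcal{Q}})^{m-1}$. -/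
open Matrix

/-- The equivalence `Fin (k+1) ≃ Unit ⊕ Fin k` sending `0` to `inl`. -/
def finConsEquiv (k : ℕ) : Fin (k + 1) ≃ Unit ⊕ Fin k where
  toFun := Fin.cases (Sum.inl ()) Sum.inr
  invFun := Sum.elim (fun _ => 0) Fin.succ
  left_inv i := by refine Fin.cases ?_ ?_ i <;> simp
  right_inv s := by rcases s with ⟨⟩ | j <;> simp

/-- Sylvester's identity in the case where the corner block is invertible. -/
theorem sylvester_aux {R : Type*} [CommRing R] (m k : ℕ)
    (hm : 1 ≤ m) (A : Matrix (Fin (m + k)) (Fin (m + k)) R)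
    [Invertible (A.submatrix (Fin.natAdd m) (Fin.natAdd m))] :
    (Matrix.of fun i j : Fin m =>
        (A.submatrix (Fin.cons (Fin.castAdd k i) (fun b : Fin k => Fin.natAdd m b))
          (Fin.cons (Fin.castAdd k j) (fun b : Fin k => Fin.natAdd m b))).det).det =
    A.det * ((A.submatrix (Fin.natAdd m) (Fin.natAdd m)).det) ^ (m - 1) := by
  obtain ⟨m', rfl⟩ : ∃ m', m = m' + 1 := ⟨m - 1, (Nat.succ_pred_eq_of_pos hm).symm⟩
  set P := A.submatrix (Fin.castAdd k) (Fin.castAdd k) with hP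
  set B := A.submatrix (Fin.castAdd k) (Fin.natAdd (m' + 1)) with hB
  set C := A.submatrix (Fin.natAdd (m' + 1)) (Fin.castAdd k) with hC
  set D := A.submatrix (Fin.natAdd (m' + 1)) (Fin.natAdd (m' + 1)) with hD
  -- det A via Schur complement
  have hblock : fromBlocks P B C D = A.submatrix finSumFinEquiv finSumFinEquiv := by
    ext i j
    rcases i with i | i <;> rcases j with j | j <;> rfl
  have hdetA : A.det = D.det * (P - B * ⅟D * C).det := by
    rw [← det_fromBlocks₂₂, hblock, det_submatrix_equiv_self]
  -- each minor via Schur complement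
  have hminor : ∀ i j : Fin (m' + 1),
      (A.submatrix (Fin.cons (Fin.castAdd k i) (fun b : Fin k => Fin.natAdd (m'+1) b))
        (Fin.cons (Fin.castAdd k j) (fun b : Fin k => Fin.natAdd (m'+1) b))).det
      = D.det * (P - B * ⅟D * C) i j := by
    intro i j
    have h2 : A.submatrix (Fin.cons (Fin.castAdd k i) (fun b : Fin k => Fin.natAdd (m'+1) b))
        (Fin.cons (Fin.castAdd k j) (fun b : Fin k => Fin.natAdd (m'+1) b))
        = (fromBlocks (Matrix.of fun _ _ : Unit => P i j)
            (Matrix.of fun (_ : Unit) b => B i b)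
            (Matrix.of fun b (_ : Unit) => C b j) D).submatrix (finConsEquiv k) (finConsEquiv k) := by
      ext a b
      refine Fin.cases ?_ (fun a' => ?_) a <;> refine Fin.cases ?_ (fun b' => ?_) b <;>
        simp [finConsEquiv, hP, hB, hC, hD]
    rw [h2, det_submatrix_equiv_self, det_fromBlocks₂₂]
    congr 1
    rw [det_unique]
    simp only [Matrix.sub_apply, of_apply, mul_apply]
  have hmat : (Matrix.of fun i j : Fin (m' + 1) =>
      (A.submatrix (Fin.cons (Fin.castAdd k i) (fun b : Fin k => Fin.natAdd (m'+1) b))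
        (Fin.cons (Fin.castAdd k j) (fun b : Fin k => Fin.natAdd (m'+1) b))).det)
      = D.det • (P - B * ⅟D * C) := by
    ext i j
    simpa using hminor i j
  rw [hmat, det_smul, hdetA, Fintype.card_fin]
  simp only [Nat.add_sub_cancel]
  ring

/-- The left-hand side of Sylvester's identity commutes with ring homomorphisms. -/
theorem sylvester_lhs_map {R R' : Type*} [CommRing R] [CommRing R'] (f : R →+* R') (m k : ℕ)
    (A : Matrix (Fin (m + k)) (Fin (m + k)) R) :
    (Matrix.of fun i j : Fin m =>
        ((A.map f).submatrix (Fin.cons (Fin.castAdd k i) (fun b : Fin k => Fin.natAdd m b))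
          (Fin.cons (Fin.castAdd k j) (fun b : Fin k => Fin.natAdd m b))).det).det =
    f ((Matrix.of fun i j : Fin m =>
        (A.submatrix (Fin.cons (Fin.castAdd k i) (fun b : Fin k => Fin.natAdd m b))
          (Fin.cons (Fin.castAdd k j) (fun b : Fin k => Fin.natAdd m b))).det).det) := by
  rw [RingHom.map_det, RingHom.mapMatrix_apply]
  congr 1
  ext i j
  simp only [map_apply, of_apply, submatrix_map, RingHom.map_det, RingHom.mapMatrix_apply]

/-- Classical Sylvester determinant identity.  Here `n = m + k`,
`c i j` is the minor of `A` on rows `{i, m+1, …, n}` and columns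
`{j, m+1, …, n}`, and `A_QQ` is the submatrix on rows and columns
`Q = {m+1, …, n}`.  Then `det C = det A * (det A_QQ)^(m-1)`. -/
theorem sylvester_determinant_identity {R : Type*} [CommRing R] (m k : ℕ)
    (hm : 1 ≤ m) (A : Matrix (Fin (m + k)) (Fin (m + k)) R) :
    (Matrix.of fun i j : Fin m =>
        (A.submatrix (Fin.cons (Fin.castAdd k i) (fun b : Fin k => Fin.natAdd m b))
          (Fin.cons (Fin.castAdd k j) (fun b : Fin k => Fin.natAdd m b))).det).det =
    A.det * ((A.submatrix (Fin.natAdd m) (Fin.natAdd m)).det) ^ (m - 1) := by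
  -- reduce to the generic matrix over `ℤ[Xᵢⱼ]`
  set S := MvPolynomial (Fin (m + k) × Fin (m + k)) ℤ with hS
  set X := Matrix.mvPolynomialX (Fin (m + k)) (Fin (m + k)) ℤ with hX
  -- the corner minor of the generic matrix is nonzero
  have hD0 : (X.submatrix (Fin.natAdd m) (Fin.natAdd m)).det ≠ 0 := by
    intro h
    set g : S →+* ℤ :=
      (MvPolynomial.eval fun p : Fin (m + k) × Fin (m + k) => if p.1 = p.2 then (1 : ℤ) else 0)
    have hX1 : X.map g = 1 := by
      ext i j
      simp only [hX, map_apply, mvPolynomialX_apply, Matrix.one_apply]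
      exact MvPolynomial.eval_X _
    have : g ((X.submatrix (Fin.natAdd m) (Fin.natAdd m)).det) = 1 := by
      rw [RingHom.map_det, RingHom.mapMatrix_apply, ← submatrix_map, hX1,
        Matrix.submatrix_one _ (fun a b hab => by simpa [Fin.ext_iff] using hab), det_one]
    rw [h, map_zero] at this
    exact zero_ne_one this
  -- the identity holds for the generic matrix, by passing to the fraction field
  have key : (Matrix.of fun i j : Fin m =>
        (X.submatrix (Fin.cons (Fin.castAdd k i) (fun b : Fin k => Fin.natAdd m b))
          (Fin.cons (Fin.castAdd k j) (fun b : Fin k => Fin.natAdd m b))).det).det =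
      X.det * ((X.submatrix (Fin.natAdd m) (Fin.natAdd m)).det) ^ (m - 1) := by
    set F := FractionRing S
    set φ : S →+* F := algebraMap S F with hφ
    apply IsFractionRing.injective S F
    rw [← hφ]
    rw [← sylvester_lhs_map φ m k X, _root_.map_mul, map_pow, RingHom.map_det, RingHom.map_det,
      RingHom.mapMatrix_apply, RingHom.mapMatrix_apply, ← submatrix_map]
    have hDF : ((X.map φ).submatrix (Fin.natAdd m) (Fin.natAdd m)).det ≠ 0 := by
      rw [submatrix_map, ← RingHom.mapMatrix_apply, ← RingHom.map_det]
      exact fun h => hD0 (IsFractionRing.injective S F (by rw [h, map_zero]))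
    haveI : Invertible ((X.map φ).submatrix (Fin.natAdd m) (Fin.natAdd m)) :=
      Matrix.invertibleOfIsUnitDet _ (isUnit_iff_ne_zero.mpr hDF)
    exact sylvester_aux m k hm (X.map φ)
  -- pull the identity back along the evaluation map
  set ψ : S →+* R :=
    ((MvPolynomial.aeval fun p : Fin (m + k) × Fin (m + k) => A p.1 p.2 :
      S →ₐ[ℤ] R) : S →+* R) with hψ
  have hXA : X.map ψ = A := by
    have := Matrix.mvPolynomialX_mapMatrix_aeval (S := R) ℤ A
    rwa [AlgHom.mapMatrix_apply] at this
  calc (Matrix.of fun i j : Fin m =>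
        (A.submatrix (Fin.cons (Fin.castAdd k i) (fun b : Fin k => Fin.natAdd m b))
          (Fin.cons (Fin.castAdd k j) (fun b : Fin k => Fin.natAdd m b))).det).det
      = ψ ((Matrix.of fun i j : Fin m =>
        (X.submatrix (Fin.cons (Fin.castAdd k i) (fun b : Fin k => Fin.natAdd m b))
          (Fin.cons (Fin.castAdd k j) (fun b : Fin k => Fin.natAdd m b))).det).det) := by
        rw [← hXA]; exact sylvester_lhs_map ψ m k X
    _ = ψ (X.det * ((X.submatrix (Fin.natAdd m) (Fin.natAdd m)).det) ^ (m - 1)) := by rw [key]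
    _ = A.det * ((A.submatrix (Fin.natAdd m) (Fin.natAdd m)).det) ^ (m - 1) := by
        rw [_root_.map_mul, map_pow, RingHom.map_det, RingHom.map_det, RingHom.mapMatrix_apply,
          RingHom.mapMatrix_apply, ← submatrix_map, hXA]
end

section
/- Let $l$ be a positive integer, let $\alpha_1,\dots,\alpha_l$ be distinct elements of a field, and for each $i$ set $e_{ri}=e_r(\alpha_1,\dots,\widehat{\alpha_i},\dots,\alpha_l)$, the $r$-th elementary symmetric polynomial in the variables with $\alpha_i$ omitted. Let $1\le p\le l$ and let $\mathcal{E}$ be the $p\times l$ matrix with entries $\mathcal{E}_{r+1,i}=e_{ri}$ for $0\le r\le p-1$. Then every $p\times p$ minor of $\mathcal{E}$ is nonzero. -/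
open Finset

/-- Every `p × p` minor of the matrix `E` with entries
`E_{r i} = e_r(α₁, …, α̂ᵢ, …, α_l)` (elementary symmetric polynomials with
`αᵢ` omitted, rows `r = 0, …, p-1`) is nonzero, provided the `αᵢ` are
distinct. -/
theorem esymm_minor_ne_zero {F : Type*} [Field F] (l p : ℕ) (hl : 1 ≤ l)
    (hp : 1 ≤ p) (hpl : p ≤ l) (α : Fin l → F) (hα : Function.Injective α)
    (c : Fin p → Fin l) (hc : Function.Injective c) :
    (Matrix.of fun r a : Fin p =>
        ∑ t ∈ (Finset.univ.erase (c a)).powersetCard (r : ℕ), ∏ i ∈ t, α i).det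
      ≠ 0 := by
  set E : ℕ → F := fun m => ∑ t ∈ (Finset.univ : Finset (Fin l)).powersetCard m,
    ∏ i ∈ t, α i with hE
  have hE0 : E 0 = 1 := by simp [hE]
  -- recurrence  E (r+1) = e_{r+1}(erase i) + α i * e_r(erase i)
  have hrec : ∀ (i : Fin l) (r : ℕ),
      E (r + 1) = (∑ t ∈ (Finset.univ.erase i).powersetCard (r + 1), ∏ j ∈ t, α j)
        + α i * ∑ t ∈ (Finset.univ.erase i).powersetCard r, ∏ j ∈ t, α j := by
    intro i r
    have hi : i ∉ Finset.univ.erase i := Finset.notMem_erase i _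
    have huniv : (Finset.univ : Finset (Fin l)) = insert i (Finset.univ.erase i) :=
      (Finset.insert_erase (Finset.mem_univ i)).symm
    have hdisj : Disjoint ((Finset.univ.erase i).powersetCard (r + 1))
        (((Finset.univ.erase i).powersetCard r).image (insert i)) := by
      rw [Finset.disjoint_right]
      intro t ht ht'
      obtain ⟨u, hu, rfl⟩ := Finset.mem_image.1 ht
      exact hi ((Finset.mem_powersetCard.1 ht').1 (Finset.mem_insert_self i u))
    have hinj : ∀ x ∈ (Finset.univ.erase i).powersetCard r,
        ∀ y ∈ (Finset.univ.erase i).powersetCard r, insert i x = insert i y → x = y := by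
      intro x hx y hy hxy
      have hix : i ∉ x := fun h => hi ((Finset.mem_powersetCard.1 hx).1 h)
      have hiy : i ∉ y := fun h => hi ((Finset.mem_powersetCard.1 hy).1 h)
      rw [← Finset.erase_insert hix, ← Finset.erase_insert hiy, hxy]
    calc E (r + 1) = ∑ t ∈ (insert i (Finset.univ.erase i)).powersetCard (r + 1),
          ∏ j ∈ t, α j := by rw [hE]; rw [← huniv]
      _ = (∑ t ∈ (Finset.univ.erase i).powersetCard (r + 1), ∏ j ∈ t, α j)
          + ∑ t ∈ ((Finset.univ.erase i).powersetCard r).image (insert i),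
            ∏ j ∈ t, α j := by
          rw [Finset.powersetCard_succ_insert hi, Finset.sum_union hdisj]
      _ = _ := by
          congr 1
          rw [Finset.sum_image hinj, Finset.mul_sum]
          apply Finset.sum_congr rfl
          intro t ht
          have hit : i ∉ t := fun h => hi ((Finset.mem_powersetCard.1 ht).1 h)
          rw [Finset.prod_insert hit]
  -- key expansion
  have key : ∀ (i : Fin l) (r : ℕ),
      ∑ t ∈ (Finset.univ.erase i).powersetCard r, ∏ j ∈ t, α j
        = ∑ s ∈ Finset.range (r + 1), E (r - s) * (-α i) ^ s := by
    intro i r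
    induction r with
    | zero => simp [hE0]
    | succ r ih =>
      have h1 : (∑ t ∈ (Finset.univ.erase i).powersetCard (r + 1), ∏ j ∈ t, α j)
          = E (r + 1) - α i * ∑ t ∈ (Finset.univ.erase i).powersetCard r, ∏ j ∈ t, α j := by
        rw [hrec i r]; ring
      have h1 := hrec i r
      rw [Finset.sum_range_succ' (fun s => E (r + 1 - s) * (-α i) ^ s) (r + 1)]
      simp only [Nat.succ_sub_succ_eq_sub, Nat.sub_zero, pow_zero, mul_one]
      have hT : ∑ s ∈ Finset.range (r + 1), E (r - s) * (-α i) ^ (s + 1)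
          = -(α i * ∑ t ∈ (Finset.univ.erase i).powersetCard r, ∏ j ∈ t, α j) := by
        rw [ih, Finset.mul_sum, ← Finset.sum_neg_distrib]
        exact Finset.sum_congr rfl fun s _ => by ring
      rw [hT]
      linear_combination -h1
  -- the factorization
  set β : Fin p → F := fun a => -α (c a) with hβ
  have hβinj : Function.Injective β := by
    intro a b hab
    exact hc (hα (neg_injective hab))
  set A : Matrix (Fin p) (Fin p) F :=
    Matrix.of fun r s : Fin p => if (s : ℕ) ≤ (r : ℕ) then E ((r : ℕ) - (s : ℕ)) else 0
    with hA
  have hfact : (Matrix.of fun r a : Fin p =>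
      ∑ t ∈ (Finset.univ.erase (c a)).powersetCard (r : ℕ), ∏ i ∈ t, α i)
      = A * (Matrix.vandermonde β).transpose := by
    ext r a
    rw [Matrix.mul_apply]
    simp only [Matrix.of_apply, Matrix.transpose_apply, Matrix.vandermonde, hA,
      Matrix.of_apply]
    rw [key (c a) r]
    rw [Fin.sum_univ_eq_sum_range
      (fun s => (if s ≤ (r : ℕ) then E ((r : ℕ) - s) else 0) * β a ^ s)]
    rw [← Finset.sum_subset (Finset.range_subset_range.2 r.is_lt)]
    · apply Finset.sum_congr rfl
      intro s hs
      rw [if_pos (Nat.lt_succ_iff.1 (Finset.mem_range.1 hs))]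
    · intro s _ hs
      rw [if_neg (fun h => hs (Finset.mem_range.2 (Nat.lt_succ_iff.2 h))), zero_mul]
  rw [hfact, Matrix.det_mul]
  have hdetA : A.det = 1 := by
    rw [Matrix.det_of_lowerTriangular A]
    · apply Finset.prod_eq_one
      intro r _
      simp [hA, hE0]
    · intro i j hij
      have hij' : i < j := hij
      simp only [hA, Matrix.of_apply]
      rw [if_neg (Nat.not_le.2 (Fin.lt_iff_val_lt_val.1 hij'))]
  rw [hdetA, one_mul, Matrix.det_transpose]
  exact Matrix.det_vandermonde_ne_zero_iff.2 hβinj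
end
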